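/- Fix f0 ∈ (1/2, 1] and let D := √(7 − 26·f0 + 28·f0²). For r ≥ 1 define α_r := −(1 − 4·f0 + 6·f0²)·((2 + 4·f0 − D)^r − (2 + 4·f0 + D)^r) + f0·D·((2 + 4·f0 − D)^r + (2 + 4·f0 + D)^r) and β_r := −(3 − 8·f0 + 8·f0²)·((2 + 4·f0 − D)^r − (2 + 4·f0 + D)^r) + D·((2 + 4·f0 − D)^r + (2 + 4·f0 + D)^r). Then for every r ≥ 1 one has β_r ≠ 0 and the pumping-policy fidelity sequence satisfies f_r = α_r / β_r. -/

import Mathlib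

/-- The pumping-policy fidelity sequence: `f 0 = f0` and
`f (r+1) = ((10 f0 - 1) f r + (1 - f0)) / ((8 f0 - 2) f r + (5 - 2 f0))`. -/
noncomputable def pumping (f0 : ℝ) : ℕ → ℝ
  | 0 => f0
  | r + 1 =>
      ((10 * f0 - 1) * pumping f0 r + (1 - f0)) /
        ((8 * f0 - 2) * pumping f0 r + (5 - 2 * f0))

theorem stmt_1 (f0 : ℝ) (hf0 : f0 ∈ Set.Ioc (1/2 : ℝ) 1)
    (D : ℝ) (hD : D = Real.sqrt (7 - 26 * f0 + 28 * f0 ^ 2))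
    (α β : ℕ → ℝ)
    (hα : ∀ r : ℕ, α r =
      -(1 - 4 * f0 + 6 * f0 ^ 2) * ((2 + 4 * f0 - D) ^ r - (2 + 4 * f0 + D) ^ r)
        + f0 * D * ((2 + 4 * f0 - D) ^ r + (2 + 4 * f0 + D) ^ r))
    (hβ : ∀ r : ℕ, β r =
      -(3 - 8 * f0 + 8 * f0 ^ 2) * ((2 + 4 * f0 - D) ^ r - (2 + 4 * f0 + D) ^ r)
        + D * ((2 + 4 * f0 - D) ^ r + (2 + 4 * f0 + D) ^ r)) :
    ∀ r : ℕ, 1 ≤ r → β r ≠ 0 ∧ pumping f0 r = α r / β r := by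

  obtain ⟨hf1, hf2⟩ := hf0
  have hcpos : (0:ℝ) < 7 - 26 * f0 + 28 * f0 ^ 2 := by nlinarith [sq_nonneg (f0 - 1/2)]
  have hDpos : 0 < D := by rw [hD]; exact Real.sqrt_pos.mpr hcpos
  have hD2 : D ^ 2 = 7 - 26 * f0 + 28 * f0 ^ 2 := by
    rw [hD, sq, Real.mul_self_sqrt hcpos.le]
  -- recurrences for α and β
  have hαrec : ∀ r : ℕ, α (r + 1) = (10 * f0 - 1) * α r + (1 - f0) * β r := by
    intro r
    rw [hα, hα, hβ, pow_succ, pow_succ]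
    linear_combination f0 * ((2 + 4 * f0 + D) ^ r - (2 + 4 * f0 - D) ^ r) * hD2
  have hβrec : ∀ r : ℕ, β (r + 1) = (8 * f0 - 2) * α r + (5 - 2 * f0) * β r := by
    intro r
    rw [hα, hβ, hβ, pow_succ, pow_succ]
    linear_combination ((2 + 4 * f0 + D) ^ r - (2 + 4 * f0 - D) ^ r) * hD2
  -- main invariant by induction
  have key : ∀ r : ℕ, (1/2 < pumping f0 r ∧ pumping f0 r ≤ 1) ∧ 0 < β r ∧
      pumping f0 r * β r = α r := by
    intro r
    induction r with
    | zero =>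
        refine ⟨⟨hf1, hf2⟩, ?_, ?_⟩
        · rw [hβ]; simp only [pow_zero]; nlinarith
        · show pumping f0 0 * β 0 = α 0
          rw [hα 0, hβ 0]; simp only [pumping, pow_zero]; ring
    | succ r ih =>
        obtain ⟨⟨hfl, hfu⟩, hβp, hfb⟩ := ih
        set f := pumping f0 r with hf
        have hdpos : 0 < (8 * f0 - 2) * f + (5 - 2 * f0) := by nlinarith
        have hβp' : 0 < β (r + 1) := by
          rw [hβrec r, ← hfb]; nlinarith
        have hstep : pumping f0 (r + 1) =
            ((10 * f0 - 1) * f + (1 - f0)) / ((8 * f0 - 2) * f + (5 - 2 * f0)) := rfl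
        constructor
        · rw [hstep]
          constructor
          · rw [lt_div_iff₀ hdpos]; nlinarith
          · rw [div_le_one hdpos]; nlinarith
        refine ⟨hβp', ?_⟩
        rw [hstep, hαrec r, hβrec r, ← hfb]
        rw [div_mul_eq_mul_div, div_eq_iff hdpos.ne']
        ring
  intro r _
  exact ⟨(key r).2.1.ne', by rw [eq_div_iff (key r).2.1.ne']; exact (key r).2.2⟩
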